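/- arXiv:1412.6822 — 2 statements merged into one kernel-verified Lean document; each statement's English description precedes it below -/
import Mathlib

section
/- The complexity function of η satisfies ℂ(1) = 4, ℂ(2) = 6, ℂ(3) = 8, and for every n ≥ 2 and every k with 0 ≤ k < 2ⁿ, writing L = 2ⁿ + k: ℂ(L) = 2ⁿ⁺¹ + 2ⁿ⁻¹ + 3k if 0 ≤ k < 2ⁿ⁻¹, and ℂ(L) = 2ⁿ⁺¹ + 2ⁿ + 2k if 2ⁿ⁻¹ ≤ k < 2ⁿ. In particular, ℂ(L+1) − ℂ(L) equals 3 for 0 ≤ k < 2ⁿ⁻¹ and equals 2 for 2ⁿ⁻¹ ≤ k < 2ⁿ. -/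
/-- The four-letter alphabet `A = {a, x, y, z}`. -/
inductive A : Type
  | a | x | y | z
  deriving DecidableEq, Repr

/-- The substitution `τ : a ↦ axa, x ↦ y, y ↦ z, z ↦ x`. -/
def tau : A → List A
  | A.a => [A.a, A.x, A.a]
  | A.x => [A.y]
  | A.y => [A.z]
  | A.z => [A.x]

/-- The substitution `τ` extended to finite words by concatenation. -/
def tauW (w : List A) : List A := w.flatMap tau

/-- `pw n = τⁿ(a)`, a word of length `2^(n+1) - 1`. -/
def pw : ℕ → List A
  | 0 => [A.a]
  | n + 1 => tauW (pw n)

/-- The fixed point `η` of `τ`: the unique one-sided infinite word having every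
`τⁿ(a)` as a prefix.  (Since `pw (n+1)` has length `2^(n+2) - 1 > n`, reading its
`n`-th letter is well defined and independent of the choice of a large enough iterate.) -/
def eta (n : ℕ) : A := (pw (n + 1)).getD n A.a

/-- `w` is a (finite) factor of `η`. -/
def IsFactorEta (w : List A) : Prop :=
  ∃ i : ℕ, w = (List.range w.length).map (fun k => eta (i + k))

/-- The complexity function of `η`: the number of distinct factors of `η` of length `L`. -/
noncomputable def etaComplexity (L : ℕ) : ℕ :=
  {w : List A | w.length = L ∧ IsFactorEta w}.ncard

/-! ### auxiliary -/

instance : Fintype A := ⟨{A.a, A.x, A.y, A.z}, fun c => by cases c <;> simp⟩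

def sig : A → A
  | A.a => A.a
  | A.x => A.y
  | A.y => A.z
  | A.z => A.x

def xi : ℕ → A
  | i => if i % 2 = 0 then A.x else sig (xi (i / 2))
  decreasing_by omega

lemma xi_def (i : ℕ) : xi i = if i % 2 = 0 then A.x else sig (xi (i / 2)) := by
  rw [xi]

lemma xi_even {n : ℕ} (h : n % 2 = 0) : xi n = A.x := by rw [xi_def, if_pos h]

lemma xi_odd {n : ℕ} (h : n % 2 = 1) : xi n = sig (xi (n / 2)) := by
  rw [xi_def, if_neg (by omega)]

lemma sig_ne_a {c : A} (h : c ≠ A.a) : sig c ≠ A.a := by cases c <;> simp_all [sig]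

lemma xi_ne_a : ∀ i, xi i ≠ A.a := by
  intro i
  induction i using Nat.strong_induction_on with
  | _ i ih =>
    rw [xi_def]
    split
    · simp
    · exact sig_ne_a (ih (i / 2) (by omega))

lemma no_zz (j : ℕ) : ¬ (xi j = A.z ∧ xi (j + 1) = A.z) := by
  rintro ⟨h1, h2⟩
  have h := Nat.even_or_odd j
  rw [Nat.even_iff, Nat.odd_iff] at h
  rcases h with h | h
  · rw [xi_even h] at h1; exact absurd h1 (by decide)
  · rw [xi_even (by omega : (j+1) % 2 = 0)] at h2; exact absurd h2 (by decide)
def ladder (l : List A) : List A := A.a :: l.flatMap (fun c => [c, A.a])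

lemma ladder_nil : ladder [] = [A.a] := rfl

lemma ladder_cons (c : A) (l : List A) : ladder (c :: l) = A.a :: c :: ladder l := by
  simp [ladder]

lemma tau_eq {c : A} (h : c ≠ A.a) : tau c = [sig c] := by cases c <;> simp_all [tau, sig]

lemma tauW_cons (c : A) (l : List A) : tauW (c :: l) = tau c ++ tauW l := by simp [tauW]

lemma tauW_ladder : ∀ l : List A, (∀ c ∈ l, c ≠ A.a) →
    tauW (ladder l) = ladder (l.flatMap (fun c => [A.x, sig c]) ++ [A.x])
  | [], _ => by simp [ladder, tauW, tau]
  | c :: l, h => by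
      have hc : c ≠ A.a := h c (by simp)
      have ih := tauW_ladder l (fun d hd => h d (by simp [hd]))
      rw [ladder_cons, tauW_cons, tauW_cons, ih, tau_eq hc]
      simp [tau, List.flatMap_cons, ladder_cons, List.append_assoc]

lemma range_map_xi (m : ℕ) :
    (List.range (2*m+1)).map xi = ((List.range m).map xi).flatMap (fun c => [A.x, sig c]) ++ [A.x] := by
  induction m with
  | zero =>
      have : (2*0+1) = 0+1 := by norm_num
      rw [this, List.range_succ]
      simp only [List.range_zero, List.map_append, List.map_nil, List.map_cons,
        List.flatMap_nil, List.nil_append]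
      rw [xi_even (by norm_num)]
  | succ m ih =>
      have h1 : 2*(m+1)+1 = (2*m+1)+1+1 := by ring
      rw [h1, List.range_succ, List.range_succ, List.map_append, List.map_append, ih,
        List.range_succ, List.map_append, List.flatMap_append]
      have hx : xi ((2*m+1)+1) = A.x := xi_even (by omega)
      have hy : xi (2*m+1) = sig (xi m) := by
        have h : (2*m+1)/2 = m := by omega
        rw [xi_odd (by omega), h]
      simp [hx, hy]

lemma pw_eq : ∀ n, pw n = ladder ((List.range (2^n - 1)).map xi)
  | 0 => by simp [pw, ladder]
  | n + 1 => by
      have key : ∀ c ∈ (List.range (2^n - 1)).map xi, c ≠ A.a := by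
        intro c hc
        simp only [List.mem_map] at hc
        obtain ⟨i, _, rfl⟩ := hc
        exact xi_ne_a i
      have h2 : 2*(2^n - 1)+1 = 2^(n+1) - 1 := by
        have : 1 ≤ 2^n := Nat.one_le_two_pow
        rw [pow_succ]; omega
      rw [show pw (n+1) = tauW (pw n) from rfl, pw_eq n, tauW_ladder _ key,
        ← range_map_xi, h2]

lemma getD_singleton_a : ∀ i : ℕ, ([A.a].getD i A.a) = A.a
  | 0 => rfl
  | i + 1 => by simp [List.getD]

lemma ladder_getD_even : ∀ (l : List A) (i : ℕ), (ladder l).getD (2*i) A.a = A.a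
  | [], i => getD_singleton_a _
  | c :: l, 0 => rfl
  | c :: l, i + 1 => by
      rw [ladder_cons, show 2*(i+1) = (2*i+1)+1 by ring, List.getD_cons_succ,
        List.getD_cons_succ]
      exact ladder_getD_even l i

lemma ladder_getD_odd : ∀ (l : List A) (i : ℕ), (ladder l).getD (2*i+1) A.a = l.getD i A.a
  | [], i => by
      rw [ladder_nil, getD_singleton_a]
      simp [List.getD]
  | c :: l, 0 => rfl
  | c :: l, i + 1 => by
      rw [ladder_cons, show 2*(i+1)+1 = (2*i+1)+1+1 by ring, List.getD_cons_succ,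
        List.getD_cons_succ, List.getD_cons_succ]
      exact ladder_getD_odd l i

lemma eta_even2 (i : ℕ) : eta (2*i) = A.a := by
  unfold eta; rw [pw_eq]; exact ladder_getD_even _ _

lemma eta_odd2 (i : ℕ) : eta (2*i+1) = xi i := by
  unfold eta
  rw [pw_eq, ladder_getD_odd]
  have h1 : i < 2^i := Nat.lt_two_pow_self
  have h2 : 2^i ≤ 2^(2*i+1) := Nat.pow_le_pow_right (by norm_num) (by omega)
  have hlen : i < ((List.range (2^(2*i+1+1) - 1)).map xi).length := by
    simp only [List.length_map, List.length_range]
    rw [pow_succ]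
    omega
  rw [List.getD_eq_getElem _ _ hlen]
  simp

lemma eta_even' {n : ℕ} (h : n % 2 = 0) : eta n = A.a := by
  obtain ⟨i, rfl⟩ : ∃ i, n = 2*i := ⟨n/2, by omega⟩
  exact eta_even2 i

lemma eta_odd' {n : ℕ} (h : n % 2 = 1) : eta n = xi (n / 2) := by
  obtain ⟨i, rfl⟩ : ∃ i, n = 2*i+1 := ⟨n/2, by omega⟩
  have h : (2*i+1)/2 = i := by omega
  rw [eta_odd2, h]

lemma xi_odd2 (j : ℕ) : xi (2*j+1) = sig (xi j) := by
  have h : (2*j+1)/2 = j := by omega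
  rw [xi_odd (by omega), h]
/-! ### words and factor sets -/

def W (g : ℕ → A) (i L : ℕ) : List A := (List.range L).map fun k => g (i + k)

lemma W_length (g : ℕ → A) (i L : ℕ) : (W g i L).length = L := by simp [W]

lemma W_eq_iff {g : ℕ → A} {i i' L : ℕ} :
    W g i L = W g i' L ↔ ∀ k < L, g (i + k) = g (i' + k) := by
  simp [W, List.map_inj_left, List.mem_range]

lemma W_succ (g : ℕ → A) (i L : ℕ) : W g i (L + 1) = W g i L ++ [g (i + L)] := by
  simp [W, List.range_succ]

def facSet (g : ℕ → A) (L : ℕ) : Set (List A) := {w | ∃ i, w = W g i L}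

lemma W_mem_facSet (g : ℕ → A) (i L : ℕ) : W g i L ∈ facSet g L := ⟨i, rfl⟩

lemma facSet_finite (g : ℕ → A) (L : ℕ) : (facSet g L).Finite := by
  apply Set.Finite.subset (List.finite_length_eq A L)
  rintro w ⟨i, rfl⟩
  simp [W_length]

lemma etaComplexity_eq (L : ℕ) : etaComplexity L = (facSet eta L).ncard := by
  unfold etaComplexity
  congr 1
  ext w
  simp only [Set.mem_setOf_eq, IsFactorEta, facSet, W]
  constructor
  · rintro ⟨hl, i, hw⟩; rw [hl] at hw; exact ⟨i, hw⟩
  · rintro ⟨i, rfl⟩; exact ⟨by simp, i, by simp⟩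

noncomputable def pc (m : ℕ) : ℕ := (facSet xi m).ncard

/-! ### interleaving maps -/

def evm (u : List A) : List A := u.flatMap fun c => [A.a, c]
def odm (u : List A) : List A := u.flatMap fun c => [c, A.a]
def evx (u : List A) : List A := u.flatMap fun c => [A.x, sig c]
def odx (u : List A) : List A := u.flatMap fun c => [sig c, A.x]
def evma (u : List A) : List A := evm u ++ [A.a]
def odma (u : List A) : List A := (odm u).dropLast
def evxa (u : List A) : List A := evx u ++ [A.x]
def odxa (u : List A) : List A := (odx u).dropLast

lemma odma_concat (u : List A) (c : A) : odma (u ++ [c]) = odm u ++ [c] := by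
  unfold odma odm
  rw [List.flatMap_append]
  simp only [List.flatMap_cons, List.flatMap_nil, List.append_nil]
  rw [show (u.flatMap fun c => [c, A.a]) ++ [c, A.a]
      = ((u.flatMap fun c => [c, A.a]) ++ [c]) ++ [A.a] by simp]
  rw [List.dropLast_concat]

lemma odxa_concat (u : List A) (c : A) : odxa (u ++ [c]) = odx u ++ [sig c] := by
  unfold odxa odx
  rw [List.flatMap_append]
  simp only [List.flatMap_cons, List.flatMap_nil, List.append_nil]
  rw [show (u.flatMap fun c => [sig c, A.x]) ++ [sig c, A.x]
      = ((u.flatMap fun c => [sig c, A.x]) ++ [sig c]) ++ [A.x] by simp]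
  rw [List.dropLast_concat]

lemma flatMap_congr {l : List ℕ} {f g : ℕ → List A} (h : ∀ a ∈ l, f a = g a) :
    l.flatMap f = l.flatMap g := by
  induction l with
  | nil => rfl
  | cons b l ih =>
      simp only [List.flatMap_cons]
      rw [h b (by simp), ih fun a ha => h a (by simp [ha])]

lemma range_map_pair (g : ℕ → A) (m : ℕ) :
    (List.range (2*m)).map g = (List.range m).flatMap fun t => [g (2*t), g (2*t+1)] := by
  induction m with
  | zero => simp
  | succ m ih =>
      rw [show 2*(m+1) = (2*m)+1+1 by ring, List.range_succ, List.range_succ,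
        List.map_append, List.map_append, ih, List.range_succ, List.flatMap_append]
      simp

/-! ### structure identities -/

lemma Wev_eta (j m : ℕ) : W eta (2*j) (2*m) = evm (W xi j m) := by
  unfold W evm
  rw [range_map_pair, List.flatMap_map]
  apply flatMap_congr
  intro t _
  show [eta (2*j + 2*t), eta (2*j + (2*t+1))] = [A.a, xi (j + t)]
  rw [eta_even' (by omega), eta_odd' (by omega), show (2*j + (2*t+1))/2 = j + t by omega]

lemma Wod_eta (j m : ℕ) : W eta (2*j+1) (2*m) = odm (W xi j m) := by
  unfold W odm
  rw [range_map_pair, List.flatMap_map]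
  apply flatMap_congr
  intro t _
  show [eta (2*j+1 + 2*t), eta (2*j+1 + (2*t+1))] = [xi (j + t), A.a]
  rw [eta_odd' (n := 2*j+1 + 2*t) (by omega), eta_even' (n := 2*j+1 + (2*t+1)) (by omega),
    show (2*j+1 + 2*t)/2 = j + t by omega]

lemma Wev_eta_odd (j m : ℕ) : W eta (2*j) (2*m+1) = evma (W xi j m) := by
  rw [W_succ, Wev_eta, evma, eta_even' (by omega)]

lemma Wod_eta_odd (j m : ℕ) : W eta (2*j+1) (2*m+1) = odma (W xi j (m+1)) := by
  rw [W_succ, Wod_eta, W_succ, odma_concat, eta_odd' (by omega),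
    show (2*j+1 + 2*m)/2 = j + m by omega]

lemma Wev_xi (j m : ℕ) : W xi (2*j) (2*m) = evx (W xi j m) := by
  unfold W evx
  rw [range_map_pair, List.flatMap_map]
  apply flatMap_congr
  intro t _
  show [xi (2*j + 2*t), xi (2*j + (2*t+1))] = [A.x, sig (xi (j + t))]
  rw [xi_even (by omega), xi_odd (by omega), show (2*j + (2*t+1))/2 = j + t by omega]

lemma Wod_xi (j m : ℕ) : W xi (2*j+1) (2*m) = odx (W xi j m) := by
  unfold W odx
  rw [range_map_pair, List.flatMap_map]
  apply flatMap_congr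
  intro t _
  show [xi (2*j+1 + 2*t), xi (2*j+1 + (2*t+1))] = [sig (xi (j + t)), A.x]
  rw [xi_odd (n := 2*j+1 + 2*t) (by omega), xi_even (n := 2*j+1 + (2*t+1)) (by omega),
    show (2*j+1 + 2*t)/2 = j + t by omega]

lemma Wev_xi_odd (j m : ℕ) : W xi (2*j) (2*m+1) = evxa (W xi j m) := by
  rw [W_succ, Wev_xi, evxa, xi_even (by omega)]

lemma Wod_xi_odd (j m : ℕ) : W xi (2*j+1) (2*m+1) = odxa (W xi j (m+1)) := by
  rw [W_succ, Wod_xi, W_succ, odxa_concat, xi_odd (by omega),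
    show (2*j+1 + 2*m)/2 = j + m by omega]
/-! ### the master splitting lemma -/

lemma sig_inj {c c' : A} (h : sig c = sig c') : c = c' := by
  cases c <;> cases c' <;> simp_all [sig]

lemma sig_eq_x {c : A} (h : sig c = A.x) : c = A.z := by
  cases c <;> simp_all [sig]

lemma facSet_split {g : ℕ → A} {L m1 m2 : ℕ} {F G : List A → List A}
    (hFW : ∀ j, F (W xi j m1) = W g (2*j) L)
    (hGW : ∀ j, G (W xi j m2) = W g (2*j+1) L)
    (hFinj : ∀ j j', W g (2*j) L = W g (2*j') L → W xi j m1 = W xi j' m1)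
    (hGinj : ∀ j j', W g (2*j+1) L = W g (2*j'+1) L → W xi j m2 = W xi j' m2)
    (hdisj : ∀ j j', W g (2*j) L ≠ W g (2*j'+1) L) :
    (facSet g L).ncard = pc m1 + pc m2 := by
  have hset : facSet g L = F '' facSet xi m1 ∪ G '' facSet xi m2 := by
    ext w
    constructor
    · rintro ⟨i, rfl⟩
      rcases Nat.mod_two_eq_zero_or_one i with hi | hi
      · obtain ⟨j, rfl⟩ : ∃ j, i = 2*j := ⟨i/2, by omega⟩
        exact Or.inl ⟨W xi j m1, W_mem_facSet _ _ _, hFW j⟩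
      · obtain ⟨j, rfl⟩ : ∃ j, i = 2*j+1 := ⟨i/2, by omega⟩
        exact Or.inr ⟨W xi j m2, W_mem_facSet _ _ _, hGW j⟩
    · rintro (⟨u, ⟨j, rfl⟩, rfl⟩ | ⟨u, ⟨j, rfl⟩, rfl⟩)
      · rw [hFW]; exact ⟨2*j, rfl⟩
      · rw [hGW]; exact ⟨2*j+1, rfl⟩
  have hinj1 : Set.InjOn F (facSet xi m1) := by
    rintro u ⟨j, rfl⟩ u' ⟨j', rfl⟩ h
    rw [hFW, hFW] at h
    exact hFinj j j' h
  have hinj2 : Set.InjOn G (facSet xi m2) := by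
    rintro u ⟨j, rfl⟩ u' ⟨j', rfl⟩ h
    rw [hGW, hGW] at h
    exact hGinj j j' h
  have hd : Disjoint (F '' facSet xi m1) (G '' facSet xi m2) := by
    rw [Set.disjoint_left]
    rintro w ⟨u, ⟨j, rfl⟩, rfl⟩ ⟨u', ⟨j', rfl⟩, hw⟩
    rw [hFW, hGW] at hw
    exact hdisj j j' hw.symm
  rw [hset, Set.ncard_union_eq hd ((facSet_finite xi m1).image F)
      ((facSet_finite xi m2).image G),
    Set.ncard_image_of_injOn hinj1, Set.ncard_image_of_injOn hinj2]
  rfl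

/-! ### the four counting identities -/

lemma eta_disj {L : ℕ} (hL : 1 ≤ L) (j j' : ℕ) : W eta (2*j) L ≠ W eta (2*j'+1) L := by
  intro h
  rw [W_eq_iff] at h
  have h0 := h 0 hL
  rw [eta_even' (n := 2*j + 0) (by omega), eta_odd' (n := 2*j'+1 + 0) (by omega)] at h0
  exact xi_ne_a _ h0.symm

lemma xi_disj {L : ℕ} (hL : 4 ≤ L) (j j' : ℕ) : W xi (2*j) L ≠ W xi (2*j'+1) L := by
  intro h
  rw [W_eq_iff] at h
  have h1 := h 1 (by omega)
  have h3 := h 3 (by omega)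
  rw [xi_odd (n := 2*j + 1) (by omega), xi_even (n := 2*j'+1 + 1) (by omega),
    show (2*j+1)/2 = j by omega] at h1
  rw [xi_odd (n := 2*j + 3) (by omega), xi_even (n := 2*j'+1 + 3) (by omega),
    show (2*j+3)/2 = j + 1 by omega] at h3
  exact no_zz j ⟨sig_eq_x h1, sig_eq_x h3⟩

lemma eta_inj_ev {L m : ℕ} (hm : ∀ t, t < m → 2*t+1 < L) (j j' : ℕ)
    (h : W eta (2*j) L = W eta (2*j') L) : W xi j m = W xi j' m := by
  rw [W_eq_iff] at h ⊢
  intro t ht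
  have h2 := h (2*t+1) (hm t ht)
  rw [eta_odd' (n := 2*j + (2*t+1)) (by omega), eta_odd' (n := 2*j' + (2*t+1)) (by omega),
    show (2*j + (2*t+1))/2 = j + t by omega,
    show (2*j' + (2*t+1))/2 = j' + t by omega] at h2
  exact h2

lemma eta_inj_od {L m : ℕ} (hm : ∀ t, t < m → 2*t < L) (j j' : ℕ)
    (h : W eta (2*j+1) L = W eta (2*j'+1) L) : W xi j m = W xi j' m := by
  rw [W_eq_iff] at h ⊢
  intro t ht
  have h2 := h (2*t) (hm t ht)
  rw [eta_odd' (n := 2*j+1 + 2*t) (by omega), eta_odd' (n := 2*j'+1 + 2*t) (by omega),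
    show (2*j+1 + 2*t)/2 = j + t by omega,
    show (2*j'+1 + 2*t)/2 = j' + t by omega] at h2
  exact h2

lemma xi_inj_ev {L m : ℕ} (hm : ∀ t, t < m → 2*t+1 < L) (j j' : ℕ)
    (h : W xi (2*j) L = W xi (2*j') L) : W xi j m = W xi j' m := by
  rw [W_eq_iff] at h ⊢
  intro t ht
  have h2 := h (2*t+1) (hm t ht)
  rw [xi_odd (n := 2*j + (2*t+1)) (by omega), xi_odd (n := 2*j' + (2*t+1)) (by omega),
    show (2*j + (2*t+1))/2 = j + t by omega,
    show (2*j' + (2*t+1))/2 = j' + t by omega] at h2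
  exact sig_inj h2

lemma xi_inj_od {L m : ℕ} (hm : ∀ t, t < m → 2*t < L) (j j' : ℕ)
    (h : W xi (2*j+1) L = W xi (2*j'+1) L) : W xi j m = W xi j' m := by
  rw [W_eq_iff] at h ⊢
  intro t ht
  have h2 := h (2*t) (hm t ht)
  rw [xi_odd (n := 2*j+1 + 2*t) (by omega), xi_odd (n := 2*j'+1 + 2*t) (by omega),
    show (2*j+1 + 2*t)/2 = j + t by omega,
    show (2*j'+1 + 2*t)/2 = j' + t by omega] at h2
  exact sig_inj h2

lemma C_even {m : ℕ} (hm : 1 ≤ m) : etaComplexity (2*m) = pc m + pc m := by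
  rw [etaComplexity_eq]
  exact facSet_split (fun j => (Wev_eta j m).symm) (fun j => (Wod_eta j m).symm)
    (eta_inj_ev (by omega)) (eta_inj_od (by omega)) (eta_disj (by omega))

lemma C_odd (m : ℕ) : etaComplexity (2*m+1) = pc m + pc (m+1) := by
  rw [etaComplexity_eq]
  exact facSet_split (fun j => (Wev_eta_odd j m).symm) (fun j => (Wod_eta_odd j m).symm)
    (eta_inj_ev (by omega)) (eta_inj_od (by omega)) (eta_disj (by omega))

lemma pc_even {m : ℕ} (hm : 2 ≤ m) : pc (2*m) = pc m + pc m := by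
  show (facSet xi (2*m)).ncard = _
  exact facSet_split (fun j => (Wev_xi j m).symm) (fun j => (Wod_xi j m).symm)
    (xi_inj_ev (by omega)) (xi_inj_od (by omega)) (xi_disj (by omega))

lemma pc_odd {m : ℕ} (hm : 2 ≤ m) : pc (2*m+1) = pc m + pc (m+1) := by
  show (facSet xi (2*m+1)).ncard = _
  exact facSet_split (fun j => (Wev_xi_odd j m).symm) (fun j => (Wod_xi_odd j m).symm)
    (xi_inj_ev (by omega)) (xi_inj_od (by omega)) (xi_disj (by omega))
/-! ### small values of xi -/

lemma xiv0 : xi 0 = A.x := xi_even (by norm_num)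
lemma xiv2 : xi 2 = A.x := xi_even (by norm_num)
lemma xiv4 : xi 4 = A.x := xi_even (by norm_num)
lemma xiv6 : xi 6 = A.x := xi_even (by norm_num)
lemma xiv8 : xi 8 = A.x := xi_even (by norm_num)
lemma xiv14 : xi 14 = A.x := xi_even (by norm_num)
lemma xiv1 : xi 1 = A.y := by rw [xi_odd (by norm_num)]; norm_num [xiv0, sig]
lemma xiv3 : xi 3 = A.z := by rw [xi_odd (by norm_num)]; norm_num [xiv1, sig]
lemma xiv5 : xi 5 = A.y := by rw [xi_odd (by norm_num)]; norm_num [xiv2, sig]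
lemma xiv7 : xi 7 = A.x := by rw [xi_odd (by norm_num)]; norm_num [xiv3, sig]
lemma xiv9 : xi 9 = A.y := by rw [xi_odd (by norm_num)]; norm_num [xiv4, sig]
lemma xiv13 : xi 13 = A.y := by rw [xi_odd (by norm_num)]; norm_num [xiv6, sig]
lemma xiv15 : xi 15 = A.y := by rw [xi_odd (by norm_num)]; norm_num [xiv7, sig]

lemma W_zero (g : ℕ → A) (i : ℕ) : W g i 0 = [] := rfl
lemma W_one (g : ℕ → A) (i : ℕ) : W g i 1 = [g i] := by
  rw [show (1:ℕ) = 0+1 from rfl, W_succ, W_zero]; simp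
lemma W_two (g : ℕ → A) (i : ℕ) : W g i 2 = [g i, g (i+1)] := by
  rw [show (2:ℕ) = 1+1 from rfl, W_succ, W_one]; rfl
lemma W_three (g : ℕ → A) (i : ℕ) : W g i 3 = [g i, g (i+1), g (i+2)] := by
  rw [show (3:ℕ) = 2+1 from rfl, W_succ, W_two]; rfl

/-! ### base values of pc -/

lemma pc0 : pc 0 = 1 := by
  show (facSet xi 0).ncard = 1
  have : facSet xi 0 = {[]} := by
    ext w; simp [facSet, W_zero]
  rw [this, Set.ncard_singleton]

lemma pc1 : pc 1 = 3 := by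
  show (facSet xi 1).ncard = 3
  have h : facSet xi 1 = {[A.x], [A.y], [A.z]} := by
    ext w
    simp only [facSet, Set.mem_setOf_eq, W_one]
    constructor
    · rintro ⟨i, rfl⟩
      cases h : xi i
      · exact absurd h (xi_ne_a i)
      · simp
      · simp
      · simp
    · intro hw
      rcases hw with h | h | h <;> subst h
      · exact ⟨0, by rw [xiv0]⟩
      · exact ⟨1, by rw [xiv1]⟩
      · exact ⟨3, by rw [xiv3]⟩
  rw [h, show ({[A.x], [A.y], [A.z]} : Set (List A))
      = (↑({[A.x], [A.y], [A.z]} : Finset (List A)) : Set (List A)) by simp,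
    Set.ncard_coe_finset]
  decide

lemma pc2 : pc 2 = 5 := by
  show (facSet xi 2).ncard = 5
  have h : facSet xi 2 = {[A.x,A.x], [A.x,A.y], [A.x,A.z], [A.y,A.x], [A.z,A.x]} := by
    ext w
    simp only [facSet, Set.mem_setOf_eq, W_two]
    constructor
    · rintro ⟨i, rfl⟩
      rcases Nat.mod_two_eq_zero_or_one i with hi | hi
      · rw [xi_even hi]
        cases h : xi (i+1)
        · exact absurd h (xi_ne_a _)
        · simp
        · simp
        · simp
      · rw [xi_even (n := i+1) (by omega)]
        cases h : xi i
        · exact absurd h (xi_ne_a _)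
        · simp
        · simp
        · simp
    · intro hw
      rcases hw with h | h | h | h | h <;> subst h
      · exact ⟨6, by rw [xiv6, show (6:ℕ)+1 = 7 from rfl, xiv7]⟩
      · exact ⟨0, by rw [xiv0, show (0:ℕ)+1 = 1 from rfl, xiv1]⟩
      · exact ⟨2, by rw [xiv2, show (2:ℕ)+1 = 3 from rfl, xiv3]⟩
      · exact ⟨1, by rw [xiv1, show (1:ℕ)+1 = 2 from rfl, xiv2]⟩
      · exact ⟨3, by rw [xiv3, show (3:ℕ)+1 = 4 from rfl, xiv4]⟩
  rw [h, show ({[A.x,A.x], [A.x,A.y], [A.x,A.z], [A.y,A.x], [A.z,A.x]} : Set (List A))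
      = (↑({[A.x,A.x], [A.x,A.y], [A.x,A.z], [A.y,A.x], [A.z,A.x]} : Finset (List A)) : Set (List A)) by simp,
    Set.ncard_coe_finset]
  decide

lemma pc3 : pc 3 = 8 := by
  show (facSet xi 3).ncard = 8
  have h : facSet xi 3 = {[A.x,A.x,A.x], [A.x,A.y,A.x], [A.x,A.z,A.x], [A.y,A.x,A.y],
      [A.y,A.x,A.z], [A.y,A.x,A.x], [A.z,A.x,A.y], [A.x,A.x,A.y]} := by
    ext w
    simp only [facSet, Set.mem_setOf_eq, W_three]
    constructor
    · rintro ⟨i, rfl⟩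
      rcases Nat.mod_two_eq_zero_or_one i with hi | hi
      · rw [xi_even hi, xi_even (n := i+2) (by omega)]
        cases h : xi (i+1)
        · exact absurd h (xi_ne_a _)
        · simp
        · simp
        · simp
      · obtain ⟨j, rfl⟩ : ∃ j, i = 2*j+1 := ⟨i/2, by omega⟩
        rw [xi_odd2, xi_even (n := 2*j+1+1) (by omega),
          show 2*j+1+2 = 2*(j+1)+1 by ring, xi_odd2]
        rcases Nat.mod_two_eq_zero_or_one j with hj | hj
        · rw [xi_even hj]
          cases h : xi (j+1)
          · exact absurd h (xi_ne_a _)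
          · simp [sig]
          · simp [sig]
          · simp [sig]
        · rw [xi_even (n := j+1) (by omega)]
          cases h : xi j
          · exact absurd h (xi_ne_a _)
          · simp [sig]
          · simp [sig]
          · simp [sig]
    · intro hw
      rcases hw with h | h | h | h | h | h | h | h <;> subst h
      · exact ⟨6, by norm_num [xiv6, xiv7, xiv8]⟩
      · exact ⟨0, by norm_num [xiv0, xiv1, xiv2]⟩
      · exact ⟨2, by norm_num [xiv2, xiv3, xiv4]⟩
      · exact ⟨13, by norm_num [xiv13, xiv14, xiv15]⟩
      · exact ⟨1, by norm_num [xiv1, xiv2, xiv3]⟩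
      · exact ⟨5, by norm_num [xiv5, xiv6, xiv7]⟩
      · exact ⟨3, by norm_num [xiv3, xiv4, xiv5]⟩
      · exact ⟨7, by norm_num [xiv7, xiv8, xiv9]⟩
  rw [h, show ({[A.x,A.x,A.x], [A.x,A.y,A.x], [A.x,A.z,A.x], [A.y,A.x,A.y],
      [A.y,A.x,A.z], [A.y,A.x,A.x], [A.z,A.x,A.y], [A.x,A.x,A.y]} : Set (List A))
      = (↑({[A.x,A.x,A.x], [A.x,A.y,A.x], [A.x,A.z,A.x], [A.y,A.x,A.y],
      [A.y,A.x,A.z], [A.y,A.x,A.x], [A.z,A.x,A.y], [A.x,A.x,A.y]} : Finset (List A)) : Set (List A)) by simp,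
    Set.ncard_coe_finset]
  decide
/-! ### closed formula for pc -/

lemma two_le_two_pow_succ (r : ℕ) : 2 ≤ 2^(r+1) := by
  calc 2 = 2^1 := rfl
  _ ≤ 2^(r+1) := Nat.pow_le_pow_right (by norm_num) (by omega)

lemma pc_formula : ∀ r : ℕ,
    (∀ j, j ≤ 2^r → pc (2^(r+1)+j) = 5*2^r + 3*j) ∧
    (∀ j, 2^r ≤ j → j ≤ 2^(r+1) → pc (2^(r+1)+j) = 2^(r+3) + 2*(j - 2^r)) := by
  intro r
  induction r with
  | zero =>
      have h4 : pc 4 = 10 := by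
        have := pc_even (m := 2) (by norm_num)
        norm_num [pc2] at this
        exact this
      constructor
      · intro j hj
        interval_cases j
        · norm_num [pc2]
        · norm_num [pc3]
      · intro j h1 h2
        interval_cases j
        · norm_num [pc3]
        · norm_num [h4]
  | succ r ih =>
      obtain ⟨lo, hi⟩ := ih
      have e1 : 2^(r+1) = 2*2^r := by rw [pow_succ]; ring
      have e2 : 2^(r+2) = 4*2^r := by rw [pow_succ, pow_succ]; ring
      have e3 : 2^(r+3) = 8*2^r := by rw [pow_succ, pow_succ, pow_succ]; ring
      have e4 : 2^(r+4) = 16*2^r := by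
        rw [pow_succ, pow_succ, pow_succ, pow_succ]; ring
      have hM : ∀ i : ℕ, 2 ≤ 2^(r+1)+i := fun i => le_trans (two_le_two_pow_succ r) (by omega)
      have E1 : (2:ℕ)^(r+1+1) = 4*2^r := by rw [show r+1+1 = r+2 from rfl, e2]
      have E2 : (2:ℕ)^(r+1+3) = 16*2^r := by rw [show r+1+3 = r+4 from rfl, e4]
      have keyE : ∀ i : ℕ, pc (2^(r+2) + 2*i) = pc (2^(r+1)+i) + pc (2^(r+1)+i) := by
        intro i
        rw [show 2^(r+2) + 2*i = 2*(2^(r+1)+i) by rw [pow_succ]; ring]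
        exact pc_even (hM i)
      have keyO : ∀ i : ℕ, pc (2^(r+2) + (2*i+1)) = pc (2^(r+1)+i) + pc (2^(r+1)+(i+1)) := by
        intro i
        rw [show 2^(r+2) + (2*i+1) = 2*(2^(r+1)+i)+1 by rw [pow_succ]; ring]
        rw [pc_odd (hM i), Nat.add_assoc]
      constructor
      · intro j hj
        rcases Nat.mod_two_eq_zero_or_one j with hp | hp
        · obtain ⟨i, rfl⟩ : ∃ i, j = 2*i := ⟨j/2, by omega⟩
          rw [keyE i, lo i (by omega)]
          omega
        · obtain ⟨i, rfl⟩ : ∃ i, j = 2*i+1 := ⟨j/2, by omega⟩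
          rw [keyO i, lo i (by omega), lo (i+1) (by omega)]
          omega
      · intro j h1 h2
        rcases Nat.mod_two_eq_zero_or_one j with hp | hp
        · obtain ⟨i, rfl⟩ : ∃ i, j = 2*i := ⟨j/2, by omega⟩
          rw [keyE i, hi i (by omega) (by omega)]
          omega
        · obtain ⟨i, rfl⟩ : ∃ i, j = 2*i+1 := ⟨j/2, by omega⟩
          rw [keyO i, hi i (by omega) (by omega), hi (i+1) (by omega) (by omega)]
          omega

lemma C_val (r k : ℕ) (hk : k ≤ 2^(r+2)) :
    etaComplexity (2^(r+2)+k) =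
      if k ≤ 2^(r+1) then 2^(r+3) + 2^(r+1) + 3*k else 2^(r+3) + 2^(r+2) + 2*k := by
  obtain ⟨lo, hi⟩ := pc_formula r
  have e1 : 2^(r+1) = 2*2^r := by rw [pow_succ]; ring
  have e2 : 2^(r+2) = 4*2^r := by rw [pow_succ, pow_succ]; ring
  have e3 : 2^(r+3) = 8*2^r := by rw [pow_succ, pow_succ, pow_succ]; ring
  have e4 : 2^(r+4) = 16*2^r := by rw [pow_succ, pow_succ, pow_succ, pow_succ]; ring
  have hM : ∀ i : ℕ, 1 ≤ 2^(r+1)+i := by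
    intro i
    have : 0 < 2^(r+1) := pow_pos (by norm_num) _
    omega
  rcases Nat.mod_two_eq_zero_or_one k with hp | hp
  · obtain ⟨j, rfl⟩ : ∃ j, k = 2*j := ⟨k/2, by omega⟩
    have key : etaComplexity (2^(r+2) + 2*j) = pc (2^(r+1)+j) + pc (2^(r+1)+j) := by
      rw [show 2^(r+2) + 2*j = 2*(2^(r+1)+j) by rw [e1, e2]; ring]
      exact C_even (hM j)
    rcases le_or_gt (2*j) (2^(r+1)) with hc | hc
    · rw [if_pos hc, key, lo j (by omega)]
      omega
    · rw [if_neg (by omega), key, hi j (by omega) (by omega)]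
      omega
  · obtain ⟨j, rfl⟩ : ∃ j, k = 2*j+1 := ⟨k/2, by omega⟩
    have key : etaComplexity (2^(r+2) + (2*j+1))
        = pc (2^(r+1)+j) + pc (2^(r+1)+(j+1)) := by
      rw [show 2^(r+2) + (2*j+1) = 2*(2^(r+1)+j)+1 by rw [e1, e2]; ring]
      rw [C_odd, Nat.add_assoc]
    rcases le_or_gt (2*j+1) (2^(r+1)) with hc | hc
    · rw [if_pos hc, key, lo j (by omega), lo (j+1) (by omega)]
      omega
    · rw [if_neg (by omega), key, hi j (by omega) (by omega), hi (j+1) (by omega) (by omega)]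
      omega

theorem complexity_theorem' :
    etaComplexity 1 = 4 ∧ etaComplexity 2 = 6 ∧ etaComplexity 3 = 8 ∧
    (∀ n k : ℕ, 2 ≤ n → k < 2 ^ n →
      (k < 2 ^ (n - 1) →
        etaComplexity (2 ^ n + k) = 2 ^ (n + 1) + 2 ^ (n - 1) + 3 * k ∧
        etaComplexity (2 ^ n + k + 1) - etaComplexity (2 ^ n + k) = 3) ∧
      (2 ^ (n - 1) ≤ k →
        etaComplexity (2 ^ n + k) = 2 ^ (n + 1) + 2 ^ n + 2 * k ∧
        etaComplexity (2 ^ n + k + 1) - etaComplexity (2 ^ n + k) = 2)) := by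
  refine ⟨?_, ?_, ?_, ?_⟩
  · have := C_odd 0
    norm_num [pc0, pc1] at this
    exact this
  · have := C_even (m := 1) (by norm_num)
    norm_num [pc1] at this
    exact this
  · have := C_odd 1
    norm_num [pc1, pc2] at this
    exact this
  · intro n k hn hk
    obtain ⟨r, rfl⟩ : ∃ r, n = r+2 := ⟨n-2, by omega⟩
    have hsub : r+2-1 = r+1 := rfl
    rw [hsub]
    have e1 : 2^(r+1) = 2*2^r := by rw [pow_succ]; ring
    have e2 : 2^(r+2) = 4*2^r := by rw [pow_succ, pow_succ]; ring
    have e3 : 2^(r+3) = 8*2^r := by rw [pow_succ, pow_succ, pow_succ]; ring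
    have e7 : 2^(r+2+1) = 2^(r+3) := rfl
    have hL : etaComplexity (2^(r+2)+k)
        = if k ≤ 2^(r+1) then 2^(r+3) + 2^(r+1) + 3*k else 2^(r+3) + 2^(r+2) + 2*k :=
      C_val r k (by omega)
    have hL1 : etaComplexity (2^(r+2)+k+1)
        = if k+1 ≤ 2^(r+1) then 2^(r+3) + 2^(r+1) + 3*(k+1)
          else 2^(r+3) + 2^(r+2) + 2*(k+1) := by
      rw [Nat.add_assoc]
      exact C_val r (k+1) (by omega)
    constructor
    · intro hk1
      rw [if_pos (by omega)] at hL
      constructor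
      · rw [hL, e7]
      · rcases le_or_gt (k+1) (2^(r+1)) with hc | hc
        · rw [if_pos hc] at hL1
          omega
        · rw [if_neg (by omega)] at hL1
          omega
    · intro hk1
      have hLv : etaComplexity (2^(r+2)+k) = 2^(r+3) + 2^(r+2) + 2*k := by
        rcases le_or_gt k (2^(r+1)) with hc | hc
        · rw [if_pos hc] at hL
          omega
        · rw [if_neg (by omega)] at hL
          exact hL
      constructor
      · rw [hLv, e7]
      · rw [if_neg (by omega)] at hL1
        omega

/-- **Complexity theorem**: `ℂ(1) = 4`, `ℂ(2) = 6`, `ℂ(3) = 8`, and for `n ≥ 2`,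
`0 ≤ k < 2ⁿ`, `L = 2ⁿ + k`:  `ℂ(L) = 2^(n+1) + 2^(n-1) + 3k` if `k < 2^(n-1)`, and
`ℂ(L) = 2^(n+1) + 2^n + 2k` if `2^(n-1) ≤ k < 2^n`. In particular the difference
`ℂ(L+1) - ℂ(L)` is `3` in the first range and `2` in the second. -/
theorem complexity_theorem :
    etaComplexity 1 = 4 ∧ etaComplexity 2 = 6 ∧ etaComplexity 3 = 8 ∧
    (∀ n k : ℕ, 2 ≤ n → k < 2 ^ n →
      (k < 2 ^ (n - 1) →
        etaComplexity (2 ^ n + k) = 2 ^ (n + 1) + 2 ^ (n - 1) + 3 * k ∧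
        etaComplexity (2 ^ n + k + 1) - etaComplexity (2 ^ n + k) = 3) ∧
      (2 ^ (n - 1) ≤ k →
        etaComplexity (2 ^ n + k) = 2 ^ (n + 1) + 2 ^ n + 2 * k ∧
        etaComplexity (2 ^ n + k + 1) - etaComplexity (2 ^ n + k) = 2)) :=
  complexity_theorem'
end

section
/- Let ζ be the substitution on A given by ζ(a) = ax, ζ(x) = ay, ζ(y) = az, ζ(z) = ax, extended to words by concatenation. Then for every n ≥ 1, ζⁿ(a) = τⁿ⁻¹(a)·τⁿ⁻¹(x) (concatenation of the word p⁽ⁿ⁻¹⁾ with the single letter τⁿ⁻¹(x) ∈ {x,y,z}). In particular, ζⁿ(a) is a prefix of η for every n ≥ 1, so the primitive substitution ζ has the same fixed point η as τ. -/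
/-- The substitution `ζ : a ↦ ax, x ↦ ay, y ↦ az, z ↦ ax`. -/
def zeta : A → List A
  | A.a => [A.a, A.x]
  | A.x => [A.a, A.y]
  | A.y => [A.a, A.z]
  | A.z => [A.a, A.x]

/-- `ζ` extended to finite words by concatenation. -/
def zetaW (w : List A) : List A := w.flatMap zeta

/-- `ζⁿ(a)`. -/
def zetaIter (n : ℕ) : List A := zetaW^[n] [A.a]

/-- The single letter `τ^m(x) ∈ {x,y,z}` (cycling `x → y → z → x`). -/
def tauX (m : ℕ) : A :=
  match m % 3 with
  | 0 => A.x
  | 1 => A.y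
  | _ => A.z

lemma tauW_append (u v : List A) : tauW (u ++ v) = tauW u ++ tauW v :=
  List.flatMap_append ..

lemma zetaW_append (u v : List A) : zetaW (u ++ v) = zetaW u ++ zetaW v :=
  List.flatMap_append ..

lemma tau_tauX (n : ℕ) : tau (tauX n) = [tauX (n + 1)] := by
  unfold tauX
  have h3 : n % 3 = 0 ∨ n % 3 = 1 ∨ n % 3 = 2 := by omega
  rcases h3 with h | h | h <;> simp [h, Nat.add_mod, tau]

lemma zeta_tauX (n : ℕ) : zeta (tauX n) = [A.a, tauX (n + 1)] := by
  unfold tauX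
  have h3 : n % 3 = 0 ∨ n % 3 = 1 ∨ n % 3 = 2 := by omega
  rcases h3 with h | h | h <;> simp [h, Nat.add_mod, zeta]

lemma pw_succ (n : ℕ) : pw (n + 1) = pw n ++ tauX n :: pw n := by
  induction n with
  | zero => decide
  | succ n ih =>
    conv_lhs => rw [show pw (n+2) = tauW (pw (n+1)) from rfl, ih]
    rw [tauW_append]
    have h : tauW (tauX n :: pw n) = tauX (n+1) :: tauW (pw n) := by
      simp [tauW, List.flatMap_cons, tau_tauX]
    rw [h]
    rfl

lemma zetaW_pw (n : ℕ) : zetaW (pw n) ++ [A.a] = pw (n + 1) := by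
  induction n with
  | zero => decide
  | succ n ih =>
    conv_lhs => rw [pw_succ n]
    rw [zetaW_append]
    have hz : zetaW (tauX n :: pw n) = A.a :: tauX (n+1) :: zetaW (pw n) := by
      simp [zetaW, List.flatMap_cons, zeta_tauX]
    rw [hz, pw_succ (n+1), ← ih]
    simp

lemma zetaIter_eq (n : ℕ) : zetaIter (n + 1) = pw n ++ [tauX n] := by
  induction n with
  | zero => decide
  | succ n ih =>
    have h : zetaIter (n + 2) = zetaW (zetaIter (n + 1)) := by
      simp [zetaIter, Function.iterate_succ_apply']
    rw [h, ih, zetaW_append]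
    have hz : zetaW [tauX n] = [A.a, tauX (n+1)] := by
      simp [zetaW, List.flatMap_cons, zeta_tauX]
    rw [hz, ← zetaW_pw n]
    simp

lemma pw_prefix_succ (n : ℕ) : pw n <+: pw (n + 1) :=
  ⟨tauX n :: pw n, (pw_succ n).symm⟩

lemma pw_prefix {m n : ℕ} (h : m ≤ n) : pw m <+: pw n := by
  induction n with
  | zero => simp_all
  | succ n ih =>
    rcases Nat.lt_or_ge m (n+1) with h' | h'
    · exact (ih (Nat.lt_succ_iff.1 h')).trans (pw_prefix_succ n)
    · have : m = n + 1 := le_antisymm h h'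
      simp [this]

lemma length_pw (n : ℕ) : (pw n).length = 2 ^ (n + 1) - 1 := by
  induction n with
  | zero => decide
  | succ n ih =>
    rw [pw_succ n]
    simp only [List.length_append, List.length_cons, ih]
    have h1 : 1 ≤ 2 ^ (n + 1) := Nat.one_le_two_pow
    have h2 : 2 ^ (n + 2) = 2 * 2 ^ (n + 1) := by ring
    omega

lemma lt_length_pw (k : ℕ) : k < (pw (k + 1)).length := by
  rw [length_pw]
  have h1 : k < 2 ^ k := Nat.lt_two_pow_self (n := k)
  have h2 : 2 ^ (k + 2) = 4 * 2 ^ k := by ring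
  omega

lemma eta_eq {N k : ℕ} (h : k < (pw N).length) : eta k = (pw N)[k] := by
  unfold eta
  rw [List.getD_eq_getElem _ _ (lt_length_pw k)]
  rcases le_or_gt N (k + 1) with hN | hN
  · exact ((pw_prefix hN).getElem h).symm
  · exact (pw_prefix (le_of_lt hN)).getElem (lt_length_pw k)

lemma pw_map_eta (N : ℕ) : pw N = (List.range (pw N).length).map eta := by
  apply List.ext_getElem
  · simp
  · intro k hk hk'
    rw [List.getElem_map, List.getElem_range, eta_eq hk]

/-- For every `n ≥ 1`, `ζⁿ(a) = τ^(n-1)(a) · τ^(n-1)(x) = p⁽ⁿ⁻¹⁾ · τ^(n-1)(x)`;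
in particular `ζⁿ(a)` is a prefix of `η`, so the primitive substitution `ζ` has
the same fixed point `η` as `τ`. -/
theorem zeta_iterates (n : ℕ) (hn : 1 ≤ n) :
    zetaIter n = pw (n - 1) ++ [tauX (n - 1)] ∧
    zetaIter n = (List.range (zetaIter n).length).map eta := by
  obtain ⟨m, rfl⟩ := Nat.exists_eq_add_of_le hn
  rw [Nat.add_comm 1 m]
  have h1 : zetaIter (m + 1) = pw m ++ [tauX m] := zetaIter_eq m
  simp only [Nat.add_sub_cancel]
  refine ⟨h1, ?_⟩
  have hpre : zetaIter (m + 1) <+: pw (m + 1) := by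
    rw [h1, pw_succ m]
    exact ⟨pw m, by simp⟩
  have hL : (zetaIter (m + 1)).length ≤ (pw (m + 1)).length := hpre.length_le
  have htake := List.prefix_iff_eq_take.1 hpre
  conv_lhs => rw [htake, pw_map_eta (m + 1)]
  rw [← List.map_take, List.take_range, Nat.min_eq_left hL]
end
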